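/- Let E be a graph with exactly N edges, where N ≥ 2, and with no loops. Let 1 ≤ k ≤ N and write N = n·k + r with 0 ≤ r ≤ k − 1. Then the number of distinct paths of length k in E is at most (n+1)^r · n^(k−r). -/

import Mathlib

/-- A directed graph (quiver): a set of vertices, a set of edges, and
source/target maps. -/
structure DGraph where
  V : Type
  E : Type
  s : E → V
  t : E → V

/-- `p : Fin k → G.E` is a path of length `k` iff consecutive edges are composable. -/
def DGraph.IsPath (G : DGraph) {k : ℕ} (p : Fin k → G.E) : Prop :=
  ∀ (i : ℕ) (h : i + 1 < k), G.t (p ⟨i, Nat.lt_of_succ_lt h⟩) = G.s (p ⟨i + 1, h⟩)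

/-- A graph has a loop iff it admits a path of positive length whose source
equals its target. -/
def DGraph.HasLoop (G : DGraph) : Prop :=
  ∃ (k : ℕ) (p : Fin (k + 1) → G.E), G.IsPath p ∧ G.s (p 0) = G.t (p (Fin.last k))

namespace Stmt6

/-! ### Numeric part -/

/-- `Q m l` : max product of `m` entries of `l` at strictly increasing positions. -/
def Q : ℕ → List ℕ → ℕ
  | 0, _ => 1
  | _+1, [] => 0
  | m+1, a :: l => max (Q (m+1) l) (a * Q m l)

/-- `T K x = ∑_j x_j · Q K (suffix after j)`. -/
def T (K : ℕ) : List ℕ → ℕ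
  | [] => 0
  | a :: l => a * Q K l + T K l

lemma Q_zero (l : List ℕ) : Q 0 l = 1 := by unfold Q; rfl

lemma Q_cons (m : ℕ) (a : ℕ) (l : List ℕ) :
    Q (m+1) (a :: l) = max (Q (m+1) l) (a * Q m l) := rfl

lemma T_zero (x : List ℕ) : T 0 x = x.sum := by
  induction x with
  | nil => rfl
  | cons a l ih => simp [T, Q_zero, ih]

/-- last element of a `(· ≥ ·)`-sorted list is smallest -/
lemma getLast_le_of_sorted : ∀ (l : List ℕ) (_ : l.Pairwise (· ≥ ·)) (hne : l ≠ []),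
    ∀ b ∈ l, l.getLast hne ≤ b := by
  intro l
  induction l with
  | nil => intro _ hne; exact absurd rfl hne
  | cons a t ih =>
    intro h hne b hb
    rcases List.pairwise_cons.mp h with ⟨ha, ht⟩
    cases t with
    | nil =>
      simp at hb; simp [hb, List.getLast]
    | cons c t' =>
      rw [List.getLast_cons (by simp)]
      rcases List.mem_cons.mp hb with rfl | hb'
      · have h1 := ih ht (by simp) ((c :: t').getLast (by simp)) (List.getLast_mem (by simp))
        exact le_trans h1 (ha _ (List.getLast_mem (by simp)))
      · exact ih ht (by simp) b hb'

/-- if `a` dominates all entries, extending a prefix product by one entry costs at most `a`. -/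
lemma take_succ_prod_le (a : ℕ) : ∀ (m : List ℕ) (j : ℕ), j < m.length →
    (∀ b ∈ m, b ≤ a) → (m.take (j+1)).prod ≤ a * (m.take j).prod := by
  intro m
  induction m with
  | nil => intro j hj; simp at hj
  | cons c t ih =>
    intro j hj hall
    cases j with
    | zero => simpa using hall c (by simp)
    | succ j' =>
      simp only [List.take_succ_cons, List.prod_cons]
      calc c * (t.take (j'+1)).prod ≤ c * (a * (t.take j').prod) := by
            exact Nat.mul_le_mul_left c (ih j' (by simpa using hj) (fun b hb => hall b (by simp [hb])))
        _ = a * (c * (t.take j').prod) := by ring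

/-- inserting preserves (weakly increases) prefix products. -/
lemma prod_take_le_orderedInsert (a : ℕ) : ∀ (m : List ℕ), m.Pairwise (· ≥ ·) → ∀ j ≤ m.length,
    (m.take j).prod ≤ ((m.orderedInsert (· ≥ ·) a).take j).prod := by
  intro m
  induction m with
  | nil => intro _ j hj; simp at hj; subst hj; simp
  | cons b t ih =>
    intro hs j hj
    rcases List.pairwise_cons.mp hs with ⟨hb, ht⟩
    by_cases hab : a ≥ b
    · rw [List.orderedInsert, if_pos hab]
      cases j with
      | zero => simp
      | succ j' =>
        rw [List.take_succ_cons]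
        have hlen : j' < (b :: t).length := by simp at hj ⊢; omega
        exact le_trans (take_succ_prod_le a (b :: t) j' hlen
          (by intro c hc; rcases List.mem_cons.mp hc with rfl | hc'
              · exact hab
              · exact le_trans (hb c hc') hab)) (by simp)
    · rw [List.orderedInsert, if_neg hab]
      cases j with
      | zero => simp
      | succ j' =>
        simp only [List.take_succ_cons, List.prod_cons]
        exact Nat.mul_le_mul_left b (ih ht j' (by simpa using hj))

/-- `a · (prefix product of length j) ≤ (prefix product of length j+1 after inserting a)`. -/
lemma mul_prod_take_le_orderedInsert (a : ℕ) : ∀ (m : List ℕ), m.Pairwise (· ≥ ·) → ∀ j,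
    a * (m.take j).prod ≤ ((m.orderedInsert (· ≥ ·) a).take (j+1)).prod := by
  intro m
  induction m with
  | nil => intro _ j; simp
  | cons b t ih =>
    intro hs j
    rcases List.pairwise_cons.mp hs with ⟨hb, ht⟩
    by_cases hab : a ≥ b
    · rw [List.orderedInsert, if_pos hab, List.take_succ_cons, List.prod_cons]
    · rw [List.orderedInsert, if_neg hab]
      cases j with
      | zero =>
        simpa using le_of_not_ge hab
      | succ j' =>
        simp only [List.take_succ_cons, List.prod_cons]
        calc a * (b * (t.take j').prod) = b * (a * (t.take j').prod) := by ring
          _ ≤ b * (((t.orderedInsert (· ≥ ·) a).take (j'+1)).prod) :=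
              Nat.mul_le_mul_left b (ih ht j')

/-- Key numeric lemma: `T K x` is bounded by a product of `K+1` naturals with sum `≤ x.sum`. -/
lemma key (K : ℕ) (x : List ℕ) :
    ∃ (l : List ℕ) (u : ℕ), l.length = K ∧ l.Pairwise (· ≥ ·) ∧
      u + l.sum ≤ x.sum ∧ (∀ j ≤ K, Q j x ≤ (l.take j).prod) ∧ T K x ≤ u * l.prod := by
  rcases Nat.eq_zero_or_pos K with rfl | hK
  · refine ⟨[], x.sum, rfl, List.Pairwise.nil, by simp, ?_, by simp [T_zero]⟩
    intro j hj
    interval_cases j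
    simp [Q_zero]
  obtain ⟨K', rfl⟩ : ∃ K', K = K' + 1 := ⟨K - 1, by omega⟩
  clear hK
  induction x with
  | nil =>
    refine ⟨List.replicate (K'+1) 0, 0, by simp, ?_, by simp, ?_, ?_⟩
    · exact List.pairwise_replicate.mpr (Or.inr (le_refl 0))
    · intro j hj
      match j with
      | 0 => simp [Q_zero]
      | j'+1 => show Q (j'+1) [] ≤ _; unfold Q; exact Nat.zero_le _
    · show T (K'+1) [] ≤ _; unfold T; exact Nat.zero_le _
  | cons a x' ih =>
    obtain ⟨l', u', hlen', hsort', hsum', hQ', hT'⟩ := ih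
    have hne : l' ≠ [] := by
      intro h; rw [h] at hlen'; simp at hlen'
    set w := l'.getLast hne with hw
    set l'' := l'.orderedInsert (· ≥ ·) a with hl''
    have hsort'' : l''.Pairwise (· ≥ ·) := hsort'.orderedInsert a l'
    have hlen'' : l''.length = K' + 2 := by
      rw [hl'', List.orderedInsert_length, hlen']
    set l := l''.take (K'+1) with hl
    have hlenl : l.length = K' + 1 := by
      rw [hl, List.length_take, hlen'']; omega
    have hsortl : l.Pairwise (· ≥ ·) := List.Pairwise.sublist (List.take_sublist _ _) hsort''
    have hne'' : l'' ≠ [] := by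
      intro h; rw [h] at hlen''; simp at hlen''
    have hperm : l''.Perm (a :: l') := List.perm_orderedInsert _ a l'
    have hsum'' : l''.sum = a + l'.sum := by
      rw [hperm.sum_eq, List.sum_cons]
    have hdl : l''.dropLast = l := by
      rw [List.dropLast_eq_take, hlen'']; rfl
    have hsuml : l.sum + l''.getLast hne'' = l''.sum := by
      conv_rhs => rw [← List.dropLast_append_getLast hne'']
      rw [hdl, List.sum_append, List.sum_cons, List.sum_nil]
      omega
    have hglmem : l''.getLast hne'' ∈ a :: l' := hperm.mem_iff.mp (List.getLast_mem hne'')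
    have hgl_ge : min a w ≤ l''.getLast hne'' := by
      rcases List.mem_cons.mp hglmem with h | h
      · rw [h]; exact min_le_left _ _
      · exact le_trans (min_le_right _ _) (getLast_le_of_sorted l' hsort' hne _ h)
    refine ⟨l, u' + min a w, hlenl, hsortl, ?_, ?_, ?_⟩
    · -- sum bound
      have : u' + l'.sum ≤ x'.sum := hsum'
      rw [List.sum_cons]
      omega
    · -- Q bounds
      intro j hj
      match j with
      | 0 => simp [Q_zero]
      | j'+1 =>
        have htake : l.take (j'+1) = l''.take (j'+1) := by
          rw [hl, List.take_take]
          congr 1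
          omega
        rw [Q_cons, htake]
        apply max_le
        · exact le_trans (hQ' (j'+1) hj)
            (prod_take_le_orderedInsert a l' hsort' (j'+1) (by omega))
        · exact le_trans (Nat.mul_le_mul_left a (hQ' j' (by omega)))
            (mul_prod_take_le_orderedInsert a l' hsort' j')
    · -- T bound
      show T (K'+1) (a :: x') ≤ _
      have hTc : T (K'+1) (a :: x') = a * Q (K'+1) x' + T (K'+1) x' := rfl
      set R := (l'.take K').prod with hR
      have hdl' : l'.dropLast = l'.take K' := by
        rw [List.dropLast_eq_take, hlen']; rfl
      have hl'prod : l'.prod = R * w := by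
        conv_lhs => rw [← List.dropLast_append_getLast hne]
        rw [hdl', List.prod_append, List.prod_cons, List.prod_nil, mul_one]
      have h1 : T (K'+1) (a :: x') ≤ (a + u') * (R * w) := by
        rw [hTc]
        calc a * Q (K'+1) x' + T (K'+1) x' ≤ a * l'.prod + u' * l'.prod := by
              have e1 : Q (K'+1) x' ≤ l'.prod := by
                have := hQ' (K'+1) (le_refl _)
                rwa [List.take_of_length_le (le_of_eq hlen')] at this
              exact Nat.add_le_add (Nat.mul_le_mul_left a e1) hT'
          _ = (a + u') * l'.prod := by ring
          _ = (a + u') * (R * w) := by rw [hl'prod]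
      have h2w : R * w ≤ l.prod := by
        have := prod_take_le_orderedInsert a l' hsort' (K'+1) (by omega)
        rwa [List.take_of_length_le (le_of_eq hlen'), hl'prod, ← hl] at this
      have h2a : R * a ≤ l.prod := by
        have := mul_prod_take_le_orderedInsert a l' hsort' K'
        rwa [← hl, mul_comm] at this
      rcases le_total a w with h | h
      · calc T (K'+1) (a :: x') ≤ (a + u') * (R * w) := h1
          _ = (u' + min a w) * (R * w) := by rw [min_eq_left h]; ring
          _ ≤ (u' + min a w) * l.prod := Nat.mul_le_mul_left _ h2w
      · calc T (K'+1) (a :: x') ≤ (a + u') * (R * w) := h1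
          _ = a * w * R + u' * w * R := by ring
          _ ≤ a * w * R + u' * a * R := by
              have : u' * w ≤ u' * a := Nat.mul_le_mul_left u' h
              exact Nat.add_le_add_left (Nat.mul_le_mul_right R this) _
          _ = (u' + min a w) * (R * a) := by rw [min_eq_right h]; ring
          _ ≤ (u' + min a w) * l.prod := Nat.mul_le_mul_left _ h2a

lemma prod_le_balanced {k n r : ℕ} (hk : 1 ≤ k) (hr : r < k) :
    ∀ (M : ℕ) (m : Multiset ℕ), (m.map (fun a => a * a)).sum ≤ M →
      Multiset.card m = k → m.sum ≤ n * k + r → m.prod ≤ (n + 1) ^ r * n ^ (k - r) := by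
  intro M
  induction M using Nat.strong_induction_on with
  | _ M ih =>
    intro m hμ hcard hsum
    by_cases hex : ∃ a ∈ m, ∃ b ∈ m.erase a, b + 2 ≤ a
    · obtain ⟨a, ha, b, hb, hab⟩ := hex
      obtain ⟨c, hc⟩ : ∃ c, a = b + 2 + c := ⟨a - (b+2), by omega⟩
      set rest := (m.erase a).erase b with hrest
      have hm2 : m.erase a = b ::ₘ rest := (Multiset.cons_erase hb).symm
      have hm1 : m = a ::ₘ b ::ₘ rest := by
        rw [← hm2]; exact (Multiset.cons_erase ha).symm
      set m' : Multiset ℕ := (b+1+c) ::ₘ (b+1) ::ₘ rest with hm'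
      have hμm : (m.map (fun a => a * a)).sum
          = (b+2+c)*(b+2+c) + b*b + ((rest.map (fun a => a * a)).sum) := by
        rw [hm1, hc]; simp [Multiset.map_cons, Multiset.sum_cons]; ring
      have hμm' : (m'.map (fun a => a * a)).sum
          = (b+1+c)*(b+1+c) + (b+1)*(b+1) + ((rest.map (fun a => a * a)).sum) := by
        rw [hm']; simp [Multiset.map_cons, Multiset.sum_cons]; ring
      have hlt : (m'.map (fun a => a * a)).sum < M := by
        have : (m'.map (fun a => a * a)).sum < (m.map (fun a => a * a)).sum := by
          rw [hμm, hμm']; nlinarith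
        omega
      have hcard' : Multiset.card m' = k := by
        rw [hm'] at *
        rw [hm1] at hcard
        simpa using hcard
      have hsum' : m'.sum ≤ n * k + r := by
        have h1 : m.sum = (b+2+c) + b + rest.sum := by
          rw [hm1, hc, Multiset.sum_cons, Multiset.sum_cons]; ring
        have h2 : m'.sum = (b+1+c) + (b+1) + rest.sum := by
          rw [hm', Multiset.sum_cons, Multiset.sum_cons]; ring
        omega
      have hprod : m.prod ≤ m'.prod := by
        rw [hm1, hm', hc, Multiset.prod_cons, Multiset.prod_cons,
          Multiset.prod_cons, Multiset.prod_cons, ← mul_assoc, ← mul_assoc]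
        have : (b+2+c) * b ≤ (b+1+c) * (b+1) := by nlinarith
        exact Nat.mul_le_mul_right _ this
      exact le_trans hprod (ih _ hlt m' (le_refl _) hcard' hsum')
    · push_neg at hex
      have hne : m ≠ 0 := by
        intro h; rw [h] at hcard; simp at hcard; omega
      obtain ⟨a0, ha0⟩ := Multiset.exists_mem_of_ne_zero hne
      set n' := sInf {a | a ∈ m} with hn'
      have hn'mem : n' ∈ m :=
        Nat.sInf_mem (⟨a0, show a0 ∈ {a | a ∈ m} from ha0⟩ : {a | a ∈ m}.Nonempty)
      have hmin : ∀ c ∈ m, n' ≤ c := fun c hc => Nat.sInf_le hc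
      have hup : ∀ c ∈ m, c ≤ n' + 1 := by
        intro c hc
        by_cases h : c = n'
        · omega
        · have hmem : n' ∈ m.erase c := by
            rw [Multiset.mem_erase_of_ne (by intro hh; exact h hh.symm)]
            exact hn'mem
          have := hex c hc n' hmem
          omega
      classical
      set m1 := m.filter (fun c => c = n' + 1) with hm1
      set m2 := m.filter (fun c => ¬ c = n' + 1) with hm2
      have hsplit : m1 + m2 = m := Multiset.filter_add_not _ m
      set s := Multiset.card m1 with hs
      have hsk : s ≤ k := by
        rw [hs, ← hcard, ← hsplit]; simp
      have hm1rep : m1 = Multiset.replicate s (n' + 1) :=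
        Multiset.eq_replicate.mpr ⟨rfl, fun b hb => (Multiset.mem_filter.mp hb).2⟩
      have hm2rep : m2 = Multiset.replicate (k - s) n' := by
        apply Multiset.eq_replicate.mpr
        constructor
        · have : Multiset.card m1 + Multiset.card m2 = k := by
            rw [← Multiset.card_add, hsplit, hcard]
          omega
        · intro b hb
          have h1 := (Multiset.mem_filter.mp hb).2
          have h2 := (Multiset.mem_filter.mp hb).1
          have := hmin b h2
          have := hup b h2
          omega
      have hprodm : m.prod = (n' + 1) ^ s * n' ^ (k - s) := by
        rw [← hsplit, Multiset.prod_add, hm1rep, hm2rep,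
          Multiset.prod_replicate, Multiset.prod_replicate]
      have hsumm : m.sum = k * n' + s := by
        obtain ⟨t, ht⟩ : ∃ t, k = s + t := ⟨k - s, by omega⟩
        rw [← hsplit, Multiset.sum_add, hm1rep, hm2rep,
          Multiset.sum_replicate, Multiset.sum_replicate, smul_eq_mul, smul_eq_mul, ht]
        have h9 : s + t - s = t := by omega
        rw [h9]; ring
      have hn'n : n' ≤ n := by
        by_contra h
        push_neg at h
        have h1 : k * (n + 1) ≤ k * n' := Nat.mul_le_mul_left k h
        rw [Nat.mul_succ] at h1
        have h2 : m.sum ≤ k * n + r := by rw [mul_comm n k] at hsum; exact hsum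
        omega
      rw [hprodm]
      rcases Nat.eq_or_lt_of_le hn'n with rfl | hlt
      · -- n' = n
        have hsr : s ≤ r := by
          have h2 : m.sum ≤ k * n' + r := by rw [mul_comm n' k] at hsum; exact hsum
          omega
        have hks : k - s = (r - s) + (k - r) := by omega
        rw [hks, pow_add, ← mul_assoc]
        have h1 : (n' + 1) ^ s * n' ^ (r - s) ≤ (n' + 1) ^ s * (n' + 1) ^ (r - s) :=
          Nat.mul_le_mul_left _ (Nat.pow_le_pow_left (by omega) _)
        calc (n' + 1) ^ s * n' ^ (r - s) * n' ^ (k - r)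
            ≤ (n' + 1) ^ s * (n' + 1) ^ (r - s) * n' ^ (k - r) := Nat.mul_le_mul_right _ h1
          _ = (n' + 1) ^ r * n' ^ (k - r) := by
              rw [← pow_add]
              have h9 : s + (r - s) = r := by omega
              rw [h9]
      · -- n' < n
        have h1 : (n' + 1) ^ s * n' ^ (k - s) ≤ (n' + 1) ^ s * (n' + 1) ^ (k - s) :=
          Nat.mul_le_mul_left _ (Nat.pow_le_pow_left (by omega) _)
        have h2 : (n' + 1) ^ s * (n' + 1) ^ (k - s) = (n' + 1) ^ k := by
          rw [← pow_add]; congr 1; omega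
        have h3 : (n' + 1) ^ k ≤ n ^ k := Nat.pow_le_pow_left (by omega) _
        have h4 : n ^ k = n ^ r * n ^ (k - r) := by rw [← pow_add]; congr 1; omega
        have h5 : n ^ r * n ^ (k - r) ≤ (n + 1) ^ r * n ^ (k - r) :=
          Nat.mul_le_mul_right _ (Nat.pow_le_pow_left (by omega) _)
        calc (n' + 1) ^ s * n' ^ (k - s) ≤ (n' + 1) ^ s * (n' + 1) ^ (k - s) := h1
          _ = (n' + 1) ^ k := h2
          _ ≤ n ^ k := h3
          _ = n ^ r * n ^ (k - r) := h4
          _ ≤ (n + 1) ^ r * n ^ (k - r) := h5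

/-- products of `k` naturals with sum `≤ n*k + r`, `r < k`, are at most balanced. -/
lemma list_prod_le_balanced {k n r : ℕ} (hk : 1 ≤ k) (hr : r < k) (y : List ℕ)
    (hlen : y.length = k) (hsum : y.sum ≤ n * k + r) :
    y.prod ≤ (n + 1) ^ r * n ^ (k - r) := by
  have := prod_le_balanced hk hr ((Multiset.ofList y).map (fun a => a * a)).sum
    (Multiset.ofList y) (le_refl _) (by simpa using hlen) (by simpa using hsum)
  simpa using this

/-! ### Graph part -/

variable {G : DGraph}

/-- there is a walk of `m+1` edges ending with edge `e` -/
def EndsWith (G : DGraph) (m : ℕ) (e : G.E) : Prop :=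
  ∃ p : Fin (m+1) → G.E, G.IsPath p ∧ p (Fin.last m) = e

lemma endsWith_zero (e : G.E) : EndsWith G 0 e :=
  ⟨fun _ => e, fun _ h => absurd h (by omega), rfl⟩

lemma endsWith_succ {m : ℕ} {e f : G.E} (h : EndsWith G m e) (hef : G.t e = G.s f) :
    EndsWith G (m+1) f := by
  obtain ⟨p, hp, hlast⟩ := h
  refine ⟨fun j => if hj : (j : ℕ) < m + 1 then p ⟨j, hj⟩ else f, ?_, ?_⟩
  · intro i hi
    dsimp only
    by_cases h1 : i + 1 < m + 1
    · rw [dif_pos (show i < m + 1 by omega), dif_pos h1]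
      exact hp i h1
    · rw [dif_pos (show i < m + 1 by omega), dif_neg (by omega)]
      have heq : (⟨i, show i < m + 1 by omega⟩ : Fin (m+1)) = Fin.last m := by
        apply Fin.ext
        simp [Fin.last]
        omega
      rw [heq, hlast, hef]
  · dsimp only
    rw [dif_neg (by simp [Fin.last])]

lemma aux_loop {m : ℕ} {p : Fin m → G.E} (hp : G.IsPath p) {i j : ℕ} (hij : i < j) (hj : j < m)
    (heq : p ⟨i, by omega⟩ = p ⟨j, hj⟩) : G.HasLoop := by
  refine ⟨j - i - 1, fun a => p ⟨i + a, by omega⟩, ?_, ?_⟩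
  · intro b hb
    have h1 : i + b + 1 < m := by omega
    exact hp (i + b) h1
  · show G.s (p ⟨i + ((0 : Fin (j - i - 1 + 1)) : ℕ), _⟩) = G.t (p ⟨i + ((Fin.last (j-i-1)) : ℕ), _⟩)
    have e0 : (⟨i + ((0 : Fin (j - i - 1 + 1)) : ℕ), by omega⟩ : Fin m) = ⟨i, by omega⟩ := by
      apply Fin.ext; simp
    have e1 : (⟨i + ((Fin.last (j-i-1)) : ℕ), by omega⟩ : Fin m) = ⟨j - 1, by omega⟩ := by
      apply Fin.ext; simp [Fin.last]; omega
    rw [e0, e1, heq]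
    have h2 : j - 1 + 1 < m := by omega
    have h3 := hp (j-1) h2
    have e2 : (⟨j - 1 + 1, h2⟩ : Fin m) = ⟨j, hj⟩ := by apply Fin.ext; simp; omega
    rw [e2] at h3
    exact h3.symm

lemma walk_card_le (hnl : ¬ G.HasLoop) [Finite G.E] {m : ℕ} {p : Fin m → G.E}
    (hp : G.IsPath p) : m ≤ Nat.card G.E := by
  have hinj : Function.Injective p := by
    intro i j hij
    by_contra hne
    rcases lt_trichotomy (i : ℕ) (j : ℕ) with h | h | h
    · exact hnl (aux_loop hp h j.isLt hij)
    · exact hne (Fin.ext h)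
    · exact hnl (aux_loop hp h i.isLt hij.symm)
  have := Nat.card_le_card_of_injective p hinj
  simpa using this

def dSet (G : DGraph) (e : G.E) : Set ℕ := {m | EndsWith G m e}

/-- one more than the length of the longest walk ending at the source of `e`. -/
noncomputable def lev (G : DGraph) (e : G.E) : ℕ := sSup (dSet G e) + 1

lemma dSet_nonempty (e : G.E) : (dSet G e).Nonempty := ⟨0, endsWith_zero e⟩

lemma dSet_bdd (hnl : ¬ G.HasLoop) [Finite G.E] (e : G.E) : BddAbove (dSet G e) := by
  refine ⟨Nat.card G.E, fun m hm => ?_⟩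
  obtain ⟨p, hp, _⟩ := hm
  have := walk_card_le hnl hp
  omega

lemma lev_pos (e : G.E) : 1 ≤ lev G e := by simp [lev]

lemma lev_le (hnl : ¬ G.HasLoop) [Finite G.E] (e : G.E) : lev G e ≤ Nat.card G.E := by
  have hmem : sSup (dSet G e) ∈ dSet G e := Nat.sSup_mem (dSet_nonempty e) (dSet_bdd hnl e)
  obtain ⟨p, hp, _⟩ := hmem
  have := walk_card_le hnl hp
  unfold lev
  omega

lemma lev_eq_of_src {e e' : G.E} (h : G.s e = G.s e') : lev G e = lev G e' := by
  have hss : ∀ f f' : G.E, G.s f = G.s f' → dSet G f ⊆ dSet G f' := by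
    intro f f' hff' m hm
    obtain ⟨p, hp, hlast⟩ := hm
    refine ⟨fun j => if j = Fin.last m then f' else p j, ?_, ?_⟩
    · intro i hi
      dsimp only
      have h1 : (⟨i, Nat.lt_of_succ_lt hi⟩ : Fin (m+1)) ≠ Fin.last m := by
        simp [Fin.ext_iff, Fin.last]
        omega
      rw [if_neg h1]
      by_cases h2 : (⟨i+1, hi⟩ : Fin (m+1)) = Fin.last m
      · rw [if_pos h2]
        have h3 := hp i hi
        rw [h3, h2, hlast, hff']
      · rw [if_neg h2]
        exact hp i hi
    · simp
  have heq : dSet G e = dSet G e' := subset_antisymm (hss e e' h) (hss e' e h.symm)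
  unfold lev
  rw [heq]

lemma lev_lt (hnl : ¬ G.HasLoop) [Finite G.E] {e f : G.E} (hef : G.t e = G.s f) :
    lev G e < lev G f := by
  have hmem : sSup (dSet G e) ∈ dSet G e := Nat.sSup_mem (dSet_nonempty e) (dSet_bdd hnl e)
  have hmem' : sSup (dSet G e) + 1 ∈ dSet G f := endsWith_succ hmem hef
  have hle := le_csSup (dSet_bdd hnl f) hmem'
  unfold lev
  omega

/-! ### Counting -/

lemma nat_card_le_one {α : Type*} [Subsingleton α] : Nat.card α ≤ 1 := by
  rcases isEmpty_or_nonempty α with h | h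
  · simp [Nat.card_of_isEmpty]
  · haveI : Inhabited α := Classical.inhabited_of_nonempty h
    haveI : Unique α := Unique.mk' α
    exact le_of_eq Nat.card_unique

lemma LQ (x : List ℕ) (mm : ℕ) :
    ∀ (d j i : ℕ), i = j + d → ∀ (hi : i < x.length),
      x[i] * Q mm (x.drop (i+1)) ≤ Q (mm+1) (x.drop j) := by
  intro d
  induction d with
  | zero =>
    intro j i hij hi
    have hij' : i = j := by omega
    subst hij'
    rw [List.drop_eq_getElem_cons hi]
    exact le_max_right _ _
  | succ d ih =>
    intro j i hij hi
    have hj : j < x.length := by omega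
    rw [List.drop_eq_getElem_cons hj]
    calc x[i] * Q mm (x.drop (i+1)) ≤ Q (mm+1) (x.drop (j+1)) := ih (j+1) i (by omega) hi
      _ ≤ max (Q (mm+1) (x.drop (j+1))) (x[j] * Q mm (x.drop (j+1))) := le_max_left _ _

lemma T_eq_sum (K : ℕ) : ∀ (x : List ℕ),
    T K x = ∑ i : Fin x.length, x[(i : ℕ)] * Q K (x.drop ((i : ℕ) + 1)) := by
  intro x
  induction x with
  | nil => simp [T]
  | cons a l ih =>
    show a * Q K l + T K l = _
    simp only [List.length_cons]
    rw [Fin.sum_univ_succ, ih]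
    simp

lemma list_sum_eq (x : List ℕ) : x.sum = ∑ i : Fin x.length, x[(i : ℕ)] := by
  induction x with
  | nil => simp
  | cons a l ih =>
    rw [List.sum_cons]
    simp only [List.length_cons]
    rw [Fin.sum_univ_succ, ih]
    simp

/-- paths of length `m+1` starting with edge `e` -/
def FollowSet (G : DGraph) (e : G.E) (m : ℕ) : Type :=
  {p : Fin (m+1) → G.E // G.IsPath p ∧ p 0 = e}

instance [Finite G.E] (e : G.E) (m : ℕ) : Finite (FollowSet G e m) := by
  unfold FollowSet; infer_instance

lemma card_follow (hnl : ¬ G.HasLoop) [Finite G.E] (x : List ℕ)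
    (hxlen : x.length = Nat.card G.E)
    (hxval : ∀ (i : ℕ) (h : i < x.length), x[i] = Nat.card {f : G.E // lev G f = i + 1}) :
    ∀ (m : ℕ) (e : G.E), Nat.card (FollowSet G e m) ≤ Q m (x.drop (lev G e)) := by
  intro m
  induction m with
  | zero =>
    intro e
    rw [Q_zero]
    haveI : Subsingleton (FollowSet G e 0) := by
      constructor
      rintro ⟨p, hp, hp0⟩ ⟨q, hq, hq0⟩
      apply Subtype.ext
      funext j
      have hj : j = 0 := by apply Fin.ext; omega
      rw [hj]
      show p 0 = q 0
      rw [hp0, hq0]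
    exact nat_card_le_one
  | succ m ihm =>
    intro e
    rcases isEmpty_or_nonempty {f : G.E // G.s f = G.t e} with hemp | hne
    · haveI := hemp
      have hempty : IsEmpty (FollowSet G e (m+1)) := by
        constructor
        rintro ⟨p, hp, hp0⟩
        have h1 := hp 0 (by omega)
        have h00 : (⟨0, by omega⟩ : Fin (m+2)) = 0 := by apply Fin.ext; simp
        rw [h00, hp0] at h1
        exact hemp.false ⟨p ⟨1, by omega⟩, h1.symm⟩
      rw [Nat.card_of_isEmpty]
      exact Nat.zero_le _
    · classical
      obtain ⟨f₀⟩ := hne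
      set j' := lev G f₀.1 with hj'
      have hlevconst : ∀ f : {f : G.E // G.s f = G.t e}, lev G f.1 = j' :=
        fun f => lev_eq_of_src (f.2.trans f₀.2.symm)
      have hjlt : lev G e < j' := by
        rw [hj']
        exact lev_lt hnl f₀.2.symm
      have hj'le : j' ≤ x.length := by rw [hxlen, hj']; exact lev_le hnl _
      have hj'pos : 1 ≤ j' := by rw [hj']; exact lev_pos _
      letI : Fintype G.E := Fintype.ofFinite _
      letI : Fintype {f : G.E // G.s f = G.t e} := Fintype.ofFinite _
      letI : ∀ f : {f : G.E // G.s f = G.t e}, Fintype (FollowSet G f.1 m) :=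
        fun f => Fintype.ofFinite _
      letI : Fintype (FollowSet G e (m+1)) := Fintype.ofFinite _
      have hΦ : Nat.card (FollowSet G e (m+1)) ≤
          Nat.card (Σ f : {f : G.E // G.s f = G.t e}, FollowSet G f.1 m) := by
        have hinj : ∃ Φ : FollowSet G e (m+1) →
            (Σ f : {f : G.E // G.s f = G.t e}, FollowSet G f.1 m), Function.Injective Φ := by
          refine ⟨fun P => ⟨⟨P.1 1, ?_⟩, ⟨fun i => P.1 ⟨(i : ℕ) + 1, by omega⟩, ?_, rfl⟩⟩, ?_⟩
          · have h1 := P.2.1 0 (by omega)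
            have h00 : (⟨0, by omega⟩ : Fin (m+2)) = 0 := by apply Fin.ext; simp
            rw [h00, P.2.2] at h1
            exact h1.symm
          · intro i hi
            exact P.2.1 (i + 1) (by omega)
          · have hrec : ∀ P : FollowSet G e (m+1), ∀ i : Fin (m+2),
                P.1 i = if hi : (i : ℕ) = 0 then e
                  else P.1 ⟨((i : ℕ) - 1) + 1, by omega⟩ := by
              intro P i
              by_cases hi : (i : ℕ) = 0
              · rw [dif_pos hi]
                have : i = 0 := by apply Fin.ext; simp [hi]
                rw [this, P.2.2]
              · rw [dif_neg hi]
                have hieq : i = (⟨((i : ℕ) - 1) + 1, by omega⟩ : Fin (m+2)) := by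
                  apply Fin.ext
                  show (i : ℕ) = ((i : ℕ) - 1) + 1
                  omega
                exact congrArg P.1 hieq
            intro P P' h
            have h2 : ∀ i : Fin (m+1), P.1 ⟨(i : ℕ) + 1, by omega⟩
                = P'.1 ⟨(i : ℕ) + 1, by omega⟩ := by
              intro i
              have hsnd := congrArg (fun z => z.2.1 i) h
              exact hsnd
            apply Subtype.ext
            funext i
            rw [hrec P i, hrec P' i]
            by_cases hi : (i : ℕ) = 0
            · rw [dif_pos hi, dif_pos hi]
            · rw [dif_neg hi, dif_neg hi]
              exact h2 ⟨(i : ℕ) - 1, by omega⟩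
        obtain ⟨Φ, hΦinj⟩ := hinj
        exact Nat.card_le_card_of_injective Φ hΦinj
      have hsig : Nat.card (Σ f : {f : G.E // G.s f = G.t e}, FollowSet G f.1 m)
          = ∑ f : {f : G.E // G.s f = G.t e}, Nat.card (FollowSet G f.1 m) := by
        rw [Nat.card_eq_fintype_card, Fintype.card_sigma]
        apply Finset.sum_congr rfl
        intro f _
        rw [Nat.card_eq_fintype_card]
      have hsum : ∑ f : {f : G.E // G.s f = G.t e}, Nat.card (FollowSet G f.1 m)
          ≤ Fintype.card {f : G.E // G.s f = G.t e} * Q m (x.drop j') := by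
        have := Finset.sum_le_card_nsmul Finset.univ
          (fun f : {f : G.E // G.s f = G.t e} => Nat.card (FollowSet G f.1 m))
          (Q m (x.drop j')) ?_
        · simpa [smul_eq_mul] using this
        · intro f _
          have := ihm f.1
          rwa [hlevconst f] at this
      have hout : Fintype.card {f : G.E // G.s f = G.t e} ≤ x[j' - 1]'(by omega) := by
        rw [hxval (j'-1) (by omega)]
        rw [← Nat.card_eq_fintype_card]
        apply Nat.card_le_card_of_injective
          (fun f : {f : G.E // G.s f = G.t e} =>
            (⟨f.1, by rw [hlevconst f]; omega⟩ : {f : G.E // lev G f = j' - 1 + 1}))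
        intro f f' hff'
        simp only [Subtype.mk.injEq] at hff'
        exact Subtype.ext hff'
      calc Nat.card (FollowSet G e (m+1))
          ≤ ∑ f : {f : G.E // G.s f = G.t e}, Nat.card (FollowSet G f.1 m) := hΦ.trans hsig.le
        _ ≤ Fintype.card {f : G.E // G.s f = G.t e} * Q m (x.drop j') := hsum
        _ ≤ x[j' - 1]'(by omega) * Q m (x.drop j') := Nat.mul_le_mul_right _ hout
        _ ≤ Q (m+1) (x.drop (lev G e)) := by
            have hd : x.drop j' = x.drop ((j' - 1) + 1) := by
              have h9 : (j' - 1) + 1 = j' := by omega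
              rw [h9]
            rw [hd]
            exact LQ x m (j' - 1 - lev G e) (lev G e) (j' - 1) (by omega) (by omega)

lemma sum_lev_fiber (hnl : ¬ G.HasLoop) [Fintype G.E] (x : List ℕ)
    (hxlen : x.length = Nat.card G.E)
    (hxval : ∀ (i : ℕ) (h : i < x.length), x[i] = Nat.card {f : G.E // lev G f = i + 1})
    (F : ℕ → ℕ) :
    ∑ e : G.E, F (lev G e) = ∑ c : Fin x.length, x[(c : ℕ)] * F ((c : ℕ) + 1) := by
  classical
  set glev : G.E → Fin x.length := fun e => ⟨lev G e - 1, by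
      have ha := lev_le hnl e; have hb := lev_pos e; omega⟩ with hg
  have hfib := Fintype.sum_fiberwise glev (fun e => F (lev G e))
  rw [← hfib]
  apply Finset.sum_congr rfl
  intro c _
  have hgval : ∀ e : G.E, (glev e).1 = lev G e - 1 := fun e => by rw [hg]
  have hlevfib : ∀ ee : {e : G.E // glev e = c}, lev G ee.1 = (c : ℕ) + 1 := by
    intro ee
    have h5 : (glev ee.1).1 = (c : ℕ) := congrArg Fin.val ee.2
    have h6 := hgval ee.1
    have hb := lev_pos ee.1
    omega
  calc (∑ ee : {e : G.E // glev e = c}, F (lev G ee.1))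
      = ∑ _ee : {e : G.E // glev e = c}, F ((c : ℕ) + 1) :=
        Finset.sum_congr rfl (fun ee _ => by rw [hlevfib ee])
    _ = Fintype.card {e : G.E // glev e = c} * F ((c : ℕ) + 1) := by
        rw [Finset.sum_const, smul_eq_mul, Finset.card_univ]
    _ = x[(c : ℕ)] * F ((c : ℕ) + 1) := by
        congr 1
        rw [hxval (c : ℕ) c.isLt, Nat.card_eq_fintype_card]
        apply Fintype.card_congr
        apply Equiv.subtypeEquivRight
        intro e
        have hb := lev_pos e
        have h6 := hgval e
        constructor
        · intro he
          have h5 : (glev e).1 = (c : ℕ) := congrArg Fin.val he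
          omega
        · intro he
          apply Fin.ext
          rw [h6]
          omega

lemma card_paths_le (hnl : ¬ G.HasLoop) [Finite G.E] (x : List ℕ)
    (hxlen : x.length = Nat.card G.E)
    (hxval : ∀ (i : ℕ) (h : i < x.length), x[i] = Nat.card {f : G.E // lev G f = i + 1})
    (K : ℕ) :
    Nat.card {p : Fin (K+1) → G.E // G.IsPath p} ≤ T K x := by
  classical
  letI : Fintype G.E := Fintype.ofFinite _
  letI : ∀ e : G.E, Fintype (FollowSet G e K) := fun _ => Fintype.ofFinite _
  have h1 : Nat.card {p : Fin (K+1) → G.E // G.IsPath p}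
      ≤ ∑ e : G.E, Nat.card (FollowSet G e K) := by
    have hinj : Function.Injective (fun P : {p : Fin (K+1) → G.E // G.IsPath p} =>
        (⟨P.1 0, ⟨P.1, P.2, rfl⟩⟩ : Σ e : G.E, FollowSet G e K)) := by
      intro P P' h
      have h2 : P.1 = P'.1 :=
        congrArg (fun z : Σ e : G.E, FollowSet G e K => z.2.1) h
      exact Subtype.ext h2
    have hle := Nat.card_le_card_of_injective _ hinj
    have heq : Nat.card (Σ e : G.E, FollowSet G e K)
        = ∑ e : G.E, Nat.card (FollowSet G e K) := by
      rw [Nat.card_eq_fintype_card, Fintype.card_sigma]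
      exact Finset.sum_congr rfl (fun e _ => (Nat.card_eq_fintype_card).symm)
    rw [heq] at hle
    exact hle
  have h2 : ∑ e : G.E, Nat.card (FollowSet G e K)
      ≤ ∑ e : G.E, Q K (x.drop (lev G e)) :=
    Finset.sum_le_sum (fun e _ => card_follow hnl x hxlen hxval K e)
  have h3 := sum_lev_fiber hnl x hxlen hxval (fun j => Q K (x.drop j))
  rw [T_eq_sum, ← h3]
  exact le_trans h1 h2

end Stmt6

/-- a graph with exactly N ≥ 2 edges and no loops, where 1 ≤ k ≤ N and
N = n·k + r with 0 ≤ r ≤ k - 1, has at most (n+1)^r · n^(k-r) paths of length k. -/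
theorem stmt_6 (G : DGraph) (N k n r : ℕ) (hN : 2 ≤ N) (hE : Nat.card G.E = N)
    (hnl : ¬ G.HasLoop) (hk : 1 ≤ k) (hkN : k ≤ N)
    (hdec : N = n * k + r) (hr : r ≤ k - 1) :
    Nat.card { p : Fin k → G.E // G.IsPath p } ≤ (n + 1) ^ r * n ^ (k - r) := by
  classical
  haveI hfin : Finite G.E := by
    have hpos : 0 < Nat.card G.E := by omega
    exact (Nat.card_pos_iff.mp hpos).2
  obtain ⟨K, rfl⟩ : ∃ K, k = K + 1 := ⟨k - 1, by omega⟩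
  set x : List ℕ := (List.range (Nat.card G.E)).map
    (fun i => Nat.card {e : G.E // Stmt6.lev G e = i + 1}) with hx
  have hxlen : x.length = Nat.card G.E := by simp [hx]
  have hxval : ∀ (i : ℕ) (h : i < x.length),
      x[i] = Nat.card {f : G.E // Stmt6.lev G f = i + 1} := by
    intro i h
    simp [hx]
  have hxsum : x.sum = Nat.card G.E := by
    letI : Fintype G.E := Fintype.ofFinite _
    have h9 := Stmt6.sum_lev_fiber hnl x hxlen hxval (fun _ => 1)
    simp only [mul_one] at h9
    rw [Stmt6.list_sum_eq, ← h9]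
    rw [Finset.sum_const, smul_eq_mul, mul_one, Finset.card_univ, Nat.card_eq_fintype_card]
  have h0 := Stmt6.card_paths_le hnl x hxlen hxval K
  obtain ⟨l, u, hlen, -, hsum, -, hT⟩ := Stmt6.key K x
  have hxN : x.sum = N := by rw [hxsum, hE]
  have hfinal : (u :: l).prod ≤ (n + 1) ^ r * n ^ (K + 1 - r) :=
    Stmt6.list_prod_le_balanced (k := K+1) (n := n) (r := r) (by omega) (by omega)
      (u :: l) (by simp [hlen]) (by rw [List.sum_cons]; omega)
  calc Nat.card {p : Fin (K+1) → G.E // G.IsPath p} ≤ Stmt6.T K x := h0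
    _ ≤ u * l.prod := hT
    _ = (u :: l).prod := (List.prod_cons).symm
    _ ≤ (n + 1) ^ r * n ^ (K + 1 - r) := hfinal
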